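/- Assume that for every s ∈ S, d(inl s, inr φ(s)) ≤ γ · W_d(κ(inl s), κ(inr φ(s))). Then ∫ d(inl s, inr φ(s)) dξ(s) ≤ γ L_P/(1−γ). -/

import Mathlib

open MeasureTheory ProbabilityTheory

/-- Total variation distance between two measures on `X`:
the supremum over measurable sets of the absolute difference of their masses. -/
noncomputable def tvDist {X : Type*} [MeasurableSpace X] (μ ν : Measure X) : ℝ :=
  ⨆ A : {A : Set X // MeasurableSet A}, |(μ A.1).toReal - (ν A.1).toReal|

/-- Dual (Kantorovich) Wasserstein distance between two measures with respect to a cost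
function `d`: the supremum over bounded measurable `d`-Lipschitz functions of the absolute
difference of their integrals. -/
noncomputable def wassDual {X : Type*} [MeasurableSpace X] (d : X → X → ℝ)
    (μ ν : Measure X) : ℝ :=
  ⨆ f : {f : X → ℝ // Measurable f ∧ (∃ C, ∀ x, |f x| ≤ C) ∧ ∀ x y, |f x - f y| ≤ d x y},
    |(∫ x, f.1 x ∂μ) - ∫ x, f.1 x ∂ν|


section Aux

set_option linter.unusedSectionVars false
variable {Sb : Type*} [Fintype Sb] [Nonempty Sb] [MeasurableSpace Sb] [DiscreteMeasurableSpace Sb]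

lemma my_integrable_of_bdd {α : Type*} [MeasurableSpace α] (μ : Measure α) [IsFiniteMeasure μ]
    {f : α → ℝ} (hm : Measurable f) {C : ℝ} (h : ∀ x, |f x| ≤ C) : Integrable f μ :=
  ⟨hm.aestronglyMeasurable, HasFiniteIntegral.of_bounded (C := C)
    (ae_of_all _ (by simpa [Real.norm_eq_abs] using h))⟩

lemma meas_finset_toReal (μ : Measure Sb) [IsProbabilityMeasure μ] (A : Finset Sb) :
    (μ (↑A : Set Sb)).toReal = ∑ x ∈ A, (μ {x}).toReal := by
  have : (↑A : Set Sb) = ⋃ x ∈ A, {x} := by ext x; simp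
  rw [this, measure_biUnion_finset ?_ (fun _ _ => measurableSet_singleton _),
    ENNReal.toReal_sum (fun x _ => measure_ne_top μ _)]
  intro x _ y _ hxy
  simp [Function.onFun, Set.disjoint_singleton, hxy]

lemma tvDist_bddAbove (μ ν : Measure Sb) [IsProbabilityMeasure μ] [IsProbabilityMeasure ν] :
    BddAbove (Set.range fun A : {A : Set Sb // MeasurableSet A} =>
      |(μ A.1).toReal - (ν A.1).toReal|) := by
  refine ⟨1, ?_⟩
  rintro x ⟨A, rfl⟩
  have h1 : (μ A.1).toReal ≤ 1 := by
    simpa using ENNReal.toReal_mono (by simp) (prob_le_one (μ := μ) (s := A.1))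
  have h2 : (ν A.1).toReal ≤ 1 := by
    simpa using ENNReal.toReal_mono (by simp) (prob_le_one (μ := ν) (s := A.1))
  have h3 : (0:ℝ) ≤ (μ A.1).toReal := ENNReal.toReal_nonneg
  have h4 : (0:ℝ) ≤ (ν A.1).toReal := ENNReal.toReal_nonneg
  rw [abs_le]; constructor <;> linarith

lemma le_tvDist (μ ν : Measure Sb) [IsProbabilityMeasure μ] [IsProbabilityMeasure ν]
    {A : Set Sb} (hA : MeasurableSet A) :
    (μ A).toReal - (ν A).toReal ≤ tvDist μ ν :=
  le_trans (le_abs_self _) (le_ciSup (tvDist_bddAbove μ ν) ⟨A, hA⟩)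

lemma tvDist_nonneg (μ ν : Measure Sb) [IsProbabilityMeasure μ] [IsProbabilityMeasure ν] :
    0 ≤ tvDist μ ν := by
  have := le_ciSup (tvDist_bddAbove μ ν) ⟨∅, MeasurableSet.empty⟩
  simp only [measure_empty] at this
  exact le_trans (abs_nonneg _) this

lemma tvDist_le_one (μ ν : Measure Sb) [IsProbabilityMeasure μ] [IsProbabilityMeasure ν] :
    tvDist μ ν ≤ 1 := by
  refine ciSup_le fun A => ?_
  have h1 : (μ A.1).toReal ≤ 1 := by
    simpa using ENNReal.toReal_mono (by simp) (prob_le_one (μ := μ) (s := A.1))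
  have h2 : (ν A.1).toReal ≤ 1 := by
    simpa using ENNReal.toReal_mono (by simp) (prob_le_one (μ := ν) (s := A.1))
  have h3 : (0:ℝ) ≤ (μ A.1).toReal := ENNReal.toReal_nonneg
  have h4 : (0:ℝ) ≤ (ν A.1).toReal := ENNReal.toReal_nonneg
  rw [abs_le]; constructor <;> linarith

lemma tvDist_comm (μ ν : Measure Sb) : tvDist μ ν = tvDist ν μ := by
  unfold tvDist
  congr 1; funext A; rw [abs_sub_comm]

lemma sum_sub_mul_le_tvDist (μ ν : Measure Sb) [IsProbabilityMeasure μ] [IsProbabilityMeasure ν]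
    (h : Sb → ℝ) (h0 : ∀ x, 0 ≤ h x) (h1 : ∀ x, h x ≤ 1) :
    ∑ x, ((μ {x}).toReal - (ν {x}).toReal) * h x ≤ tvDist μ ν := by
  classical
  set a : Sb → ℝ := fun x => (μ {x}).toReal with ha
  set b : Sb → ℝ := fun x => (ν {x}).toReal with hb
  set A : Finset Sb := Finset.univ.filter (fun x => b x ≤ a x) with hA
  have step1 : ∑ x, (a x - b x) * h x ≤ ∑ x ∈ A, (a x - b x) * h x := by
    rw [← Finset.sum_filter_add_sum_filter_not Finset.univ (fun x => b x ≤ a x)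
      (fun x => (a x - b x) * h x)]
    have : ∑ x ∈ Finset.univ.filter (fun x => ¬ b x ≤ a x), (a x - b x) * h x ≤ 0 := by
      refine Finset.sum_nonpos fun x hx => ?_
      simp only [Finset.mem_filter, not_le] at hx
      exact mul_nonpos_of_nonpos_of_nonneg (by linarith [hx.2]) (h0 x)
    linarith
  have step2 : ∑ x ∈ A, (a x - b x) * h x ≤ ∑ x ∈ A, (a x - b x) := by
    refine Finset.sum_le_sum fun x hx => ?_
    simp only [hA, Finset.mem_filter] at hx
    calc (a x - b x) * h x ≤ (a x - b x) * 1 :=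
          mul_le_mul_of_nonneg_left (h1 x) (by linarith [hx.2])
      _ = a x - b x := mul_one _
  have step3 : ∑ x ∈ A, (a x - b x) = (μ (↑A : Set Sb)).toReal - (ν (↑A : Set Sb)).toReal := by
    rw [Finset.sum_sub_distrib, meas_finset_toReal μ A, meas_finset_toReal ν A]
  calc ∑ x, (a x - b x) * h x ≤ ∑ x ∈ A, (a x - b x) := le_trans step1 step2
    _ = (μ (↑A : Set Sb)).toReal - (ν (↑A : Set Sb)).toReal := step3
    _ ≤ tvDist μ ν := le_tvDist μ ν (MeasurableSet.of_discrete)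

lemma abs_integral_sub_le_tvDist (μ ν : Measure Sb) [IsProbabilityMeasure μ]
    [IsProbabilityMeasure ν] (g : Sb → ℝ) (hg : ∀ x y, |g x - g y| ≤ 1) :
    |(∫ x, g x ∂μ) - ∫ x, g x ∂ν| ≤ tvDist μ ν := by
  classical
  rw [integral_fintype (Integrable.of_finite), integral_fintype (Integrable.of_finite)]
  simp only [measureReal_def]
  set c : ℝ := Finset.univ.inf' Finset.univ_nonempty g with hc
  obtain ⟨x₀, -, hx₀⟩ := Finset.exists_mem_eq_inf' Finset.univ_nonempty g
  set h : Sb → ℝ := fun x => g x - c with hh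
  have hcle : ∀ x, c ≤ g x := fun x => Finset.inf'_le g (Finset.mem_univ x)
  have h0 : ∀ x, 0 ≤ h x := fun x => sub_nonneg.mpr (hcle x)
  have h1 : ∀ x, h x ≤ 1 := fun x => by
    have := hg x x₀
    have hle : c ≤ g x := hcle x
    have hcx : c = g x₀ := hx₀
    simp only [hh]
    rw [abs_le] at this
    rw [hcx]; linarith [this.1, this.2]
  have hsum : ∀ (m : Measure Sb), IsProbabilityMeasure m → ∑ x, (m {x}).toReal = 1 := by
    intro m hm
    rw [← meas_finset_toReal m Finset.univ]
    simp
  have key : ∑ x, (μ {x}).toReal • g x - ∑ x, (ν {x}).toReal • g x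
      = ∑ x, ((μ {x}).toReal - (ν {x}).toReal) * h x := by
    simp only [hh, smul_eq_mul, mul_sub, sub_mul, Finset.sum_sub_distrib,
      ← Finset.sum_mul, hsum μ inferInstance, hsum ν inferInstance]
    ring
  rw [key, abs_le]
  constructor
  · have := sum_sub_mul_le_tvDist ν μ h h0 h1
    rw [tvDist_comm ν μ] at this
    have heq : ∑ x, ((ν {x}).toReal - (μ {x}).toReal) * h x
        = -∑ x, ((μ {x}).toReal - (ν {x}).toReal) * h x := by
      rw [← Finset.sum_neg_distrib]; congr 1; funext x; ring
    linarith [heq ▸ this]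
  · exact sum_sub_mul_le_tvDist μ ν h h0 h1

end Aux


section WD

set_option linter.unusedSectionVars false
variable {S : Type*} [MeasurableSpace S]
  {Sb : Type*} [Fintype Sb] [Nonempty Sb] [MeasurableSpace Sb] [DiscreteMeasurableSpace Sb]

lemma wassDual_le_aux (d : (S ⊕ Sb) → (S ⊕ Sb) → ℝ)
    (hd01 : ∀ x y, d x y ∈ Set.Icc (0:ℝ) 1)
    (μ : Measure S) [IsProbabilityMeasure μ] (ν : Measure Sb) [IsProbabilityMeasure ν]
    (φ : S → Sb) (hφ : Measurable φ)
    (hDmeas : Measurable (fun t => d (Sum.inl t) (Sum.inr (φ t)))) :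
    wassDual d (μ.map Sum.inl) (ν.map Sum.inr) ≤
      (∫ t, d (Sum.inl t) (Sum.inr (φ t)) ∂μ) + tvDist (μ.map φ) ν := by
  haveI : IsProbabilityMeasure (μ.map φ) := Measure.isProbabilityMeasure_map hφ.aemeasurable
  haveI : Nonempty {f : (S ⊕ Sb) → ℝ // Measurable f ∧ (∃ C, ∀ x, |f x| ≤ C) ∧
      ∀ x y, |f x - f y| ≤ d x y} :=
    ⟨⟨fun _ => 0, measurable_const, ⟨0, fun x => by simp⟩,
      fun x y => by simpa using (hd01 x y).1⟩⟩
  refine ciSup_le fun F => ?_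
  obtain ⟨f, hfm, ⟨C, hC⟩, hfL⟩ := F
  simp only
  have h1 : ∫ x, f x ∂(μ.map Sum.inl) = ∫ t, f (Sum.inl t) ∂μ :=
    integral_map measurable_inl.aemeasurable hfm.aestronglyMeasurable
  have h2 : ∫ x, f x ∂(ν.map Sum.inr) = ∫ x, f (Sum.inr x) ∂ν :=
    integral_map measurable_inr.aemeasurable hfm.aestronglyMeasurable
  have h3 : ∫ t, f (Sum.inr (φ t)) ∂μ = ∫ x, f (Sum.inr x) ∂(μ.map φ) :=
    (integral_map hφ.aemeasurable ((hfm.comp measurable_inr).aestronglyMeasurable)).symm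
  have int1 : Integrable (fun t => f (Sum.inl t)) μ :=
    my_integrable_of_bdd μ (hfm.comp measurable_inl) (fun t => hC _)
  have int2 : Integrable (fun t => f (Sum.inr (φ t))) μ :=
    my_integrable_of_bdd μ (hfm.comp (measurable_inr.comp hφ)) (fun t => hC _)
  have intd : Integrable (fun t => d (Sum.inl t) (Sum.inr (φ t))) μ :=
    my_integrable_of_bdd μ hDmeas (C := 1)
      (fun t => abs_le.mpr ⟨by linarith [(hd01 (Sum.inl t) (Sum.inr (φ t))).1],
        (hd01 _ _).2⟩)
  have step1 : |(∫ t, f (Sum.inl t) ∂μ) - ∫ t, f (Sum.inr (φ t)) ∂μ| ≤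
      ∫ t, d (Sum.inl t) (Sum.inr (φ t)) ∂μ := by
    rw [← integral_sub int1 int2]
    calc |∫ t, (f (Sum.inl t) - f (Sum.inr (φ t))) ∂μ|
        ≤ ∫ t, |f (Sum.inl t) - f (Sum.inr (φ t))| ∂μ := by
          simpa [Real.norm_eq_abs] using
            norm_integral_le_integral_norm (fun t => f (Sum.inl t) - f (Sum.inr (φ t))) (μ := μ)
      _ ≤ ∫ t, d (Sum.inl t) (Sum.inr (φ t)) ∂μ :=
          integral_mono (int1.sub int2).abs intd (fun t => hfL _ _)
  have step2 : |(∫ t, f (Sum.inr (φ t)) ∂μ) - ∫ x, f (Sum.inr x) ∂ν| ≤ tvDist (μ.map φ) ν := by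
    rw [h3]
    exact abs_integral_sub_le_tvDist (μ.map φ) ν (fun x => f (Sum.inr x))
      (fun x y => le_trans (hfL _ _) (hd01 _ _).2)
  calc |(∫ x, f x ∂(μ.map Sum.inl)) - ∫ x, f x ∂(ν.map Sum.inr)|
      = |(∫ t, f (Sum.inl t) ∂μ) - ∫ x, f (Sum.inr x) ∂ν| := by rw [h1, h2]
    _ ≤ |(∫ t, f (Sum.inl t) ∂μ) - ∫ t, f (Sum.inr (φ t)) ∂μ| +
        |(∫ t, f (Sum.inr (φ t)) ∂μ) - ∫ x, f (Sum.inr x) ∂ν| := abs_sub_le _ _ _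
    _ ≤ _ := add_le_add step1 step2

end WD


/-- Bisimulation bound for the label-based bisimulation pseudometric: if the pseudometric `d`
on the disjoint union of the ground and latent state spaces satisfies
`d(s, φ(s)) ≤ γ·W_d(κ(s), κ(φ(s)))`, then the expected distance between a state and its
embedding under the stationary distribution `ξ` is at most `γ·L_P/(1-γ)`. -/
theorem bisimulation_bound_labels
    {S : Type*} [MeasurableSpace S]
    {Sb : Type*} [Fintype Sb] [Nonempty Sb] [MeasurableSpace Sb] [DiscreteMeasurableSpace Sb]
    (P : Kernel S S) [IsMarkovKernel P]
    (Pb : Sb → PMF Sb)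
    (φ : S → Sb) (hφ : Measurable φ)
    (ξ : Measure S) [IsProbabilityMeasure ξ]
    (hinv : ∀ A : Set S, MeasurableSet A → ξ A = ∫⁻ s, P s A ∂ξ)
    (γ : ℝ) (hγ0 : 0 ≤ γ) (hγ1 : γ < 1)
    (d : (S ⊕ Sb) → (S ⊕ Sb) → ℝ)
    (hdmeas : Measurable (Function.uncurry d))
    (hd01 : ∀ x y, d x y ∈ Set.Icc (0 : ℝ) 1)
    (hdrefl : ∀ x, d x x = 0)
    (hdsymm : ∀ x y, d x y = d y x)
    (hdtri : ∀ x y z, d x z ≤ d x y + d y z)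
    (hfix : ∀ s : S,
      d (Sum.inl s) (Sum.inr (φ s)) ≤
        γ * wassDual d (((P s).map Sum.inl : Measure (S ⊕ Sb)))
          (((Pb (φ s)).toMeasure.map Sum.inr : Measure (S ⊕ Sb)))) :
    ∫ s, d (Sum.inl s) (Sum.inr (φ s)) ∂ξ ≤
      γ * (∫ s, tvDist ((P s).map φ) ((Pb (φ s)).toMeasure) ∂ξ) / (1 - γ) := by
  classical
  set Dfun : S → ℝ := fun s => d (Sum.inl s) (Sum.inr (φ s)) with hDfun
  have hDmeas : Measurable Dfun := by
    have : Dfun = (Function.uncurry d) ∘ (fun s => (Sum.inl s, Sum.inr (φ s))) := rfl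
    rw [this]
    exact hdmeas.comp (measurable_inl.prodMk (measurable_inr.comp hφ))
  have hD0 : ∀ s, 0 ≤ Dfun s := fun s => (hd01 _ _).1
  have hD1 : ∀ s, Dfun s ≤ 1 := fun s => (hd01 _ _).2
  set g : S → ENNReal := fun t => ENNReal.ofReal (Dfun t) with hg
  have hgmeas : Measurable g := hDmeas.ennreal_ofReal
  have hg1 : ∀ t, g t ≤ 1 := fun t => by
    simpa [hg] using ENNReal.ofReal_le_one.mpr (hD1 t)
  -- the expected one-step distance
  set Afun : S → ℝ := fun s => ∫ t, Dfun t ∂(P s) with hAfun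
  have hArepr : Afun = fun s => (∫⁻ t, g t ∂(P s)).toReal := by
    funext s
    exact integral_eq_lintegral_of_nonneg_ae (ae_of_all _ hD0) hDmeas.aestronglyMeasurable
  have hlint_ne_top : ∀ m : Measure S, IsProbabilityMeasure m → (∫⁻ t, g t ∂m) ≠ ⊤ := by
    intro m hm
    have : (∫⁻ t, g t ∂m) ≤ 1 := by
      calc (∫⁻ t, g t ∂m) ≤ ∫⁻ _, 1 ∂m := lintegral_mono hg1
        _ = 1 := by simp
    exact ne_top_of_le_ne_top (by simp) this
  have hAmeas : Measurable Afun := by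
    rw [hArepr]
    exact (Measurable.lintegral_kernel_prod_right (κ := P)
      (f := fun _ t => g t) (hgmeas.comp measurable_snd)).ennreal_toReal
  have hA0 : ∀ s, 0 ≤ Afun s := fun s => integral_nonneg hD0
  have hA1 : ∀ s, Afun s ≤ 1 := by
    intro s
    have hint : Integrable Dfun (P s) := my_integrable_of_bdd _ hDmeas (C := 1)
      (fun t => abs_le.mpr ⟨by linarith [hD0 t], hD1 t⟩)
    calc Afun s ≤ ∫ _, (1:ℝ) ∂(P s) := integral_mono hint (integrable_const 1) hD1
      _ = 1 := by simp
  -- the TV term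
  set Bfun : S → ℝ := fun s => tvDist ((P s).map φ) ((Pb (φ s)).toMeasure) with hBfun
  have hprobmap : ∀ s, IsProbabilityMeasure ((P s).map φ) := fun s =>
    Measure.isProbabilityMeasure_map hφ.aemeasurable
  have hBmeas : Measurable Bfun := by
    haveI : Fintype {A : Set Sb // MeasurableSet A} := Fintype.ofFinite _
    haveI : Nonempty {A : Set Sb // MeasurableSet A} := ⟨⟨∅, MeasurableSet.empty⟩⟩
    have hrepr : Bfun = Finset.univ.sup' Finset.univ_nonempty
        (fun (A : {A : Set Sb // MeasurableSet A}) (s : S) =>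
          |(((P s).map φ) A.1).toReal - ((Pb (φ s)).toMeasure A.1).toReal|) := by
      funext s
      rw [Finset.sup'_apply, Finset.sup'_univ_eq_ciSup]
      rfl
    rw [hrepr]
    refine Finset.measurable_sup' _ fun A _ => ?_
    have h1 : Measurable fun s => (((P s).map φ) A.1).toReal := by
      simp only [Measure.map_apply hφ A.2]
      exact (P.measurable_coe (hφ A.2)).ennreal_toReal
    have h2 : Measurable fun s => ((Pb (φ s)).toMeasure A.1).toReal :=
      (measurable_of_countable fun x => ((Pb x).toMeasure A.1).toReal).comp hφ
    exact (h1.sub h2).abs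
  have hB0 : ∀ s, 0 ≤ Bfun s := fun s => by
    haveI := hprobmap s
    exact tvDist_nonneg _ _
  have hB1 : ∀ s, Bfun s ≤ 1 := fun s => by
    haveI := hprobmap s
    exact tvDist_le_one _ _
  -- pointwise bound
  have hpoint : ∀ s, Dfun s ≤ γ * (Afun s + Bfun s) := by
    intro s
    refine le_trans (hfix s) (mul_le_mul_of_nonneg_left ?_ hγ0)
    exact wassDual_le_aux d hd01 (P s) ((Pb (φ s)).toMeasure) φ hφ hDmeas
  -- integrability
  have intD : Integrable Dfun ξ := my_integrable_of_bdd _ hDmeas (C := 1)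
    (fun t => abs_le.mpr ⟨by linarith [hD0 t], hD1 t⟩)
  have intA : Integrable Afun ξ := my_integrable_of_bdd _ hAmeas (C := 1)
    (fun t => abs_le.mpr ⟨by linarith [hA0 t], hA1 t⟩)
  have intB : Integrable Bfun ξ := my_integrable_of_bdd _ hBmeas (C := 1)
    (fun t => abs_le.mpr ⟨by linarith [hB0 t], hB1 t⟩)
  -- invariance
  have hbind : ξ.bind (⇑P) = ξ := by
    refine Measure.ext fun A hA => ?_
    rw [Measure.bind_apply hA P.measurable.aemeasurable, ← hinv A hA]
  have hinvD : ∫ s, Afun s ∂ξ = ∫ s, Dfun s ∂ξ := by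
    rw [hArepr]
    have h2 : ∫ s, (∫⁻ t, g t ∂(P s)).toReal ∂ξ
        = (∫⁻ s, ∫⁻ t, g t ∂(P s) ∂ξ).toReal := by
      rw [integral_eq_lintegral_of_nonneg_ae (ae_of_all _ fun s => ENNReal.toReal_nonneg)
        ((Measurable.lintegral_kernel_prod_right (κ := P)
          (f := fun _ t => g t) (hgmeas.comp measurable_snd)).ennreal_toReal).aestronglyMeasurable]
      congr 1
      refine lintegral_congr fun s => ?_
      exact ENNReal.ofReal_toReal (hlint_ne_top (P s) inferInstance)
    have h3 : ∫ s, Dfun s ∂ξ = (∫⁻ s, g s ∂ξ).toReal :=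
      integral_eq_lintegral_of_nonneg_ae (ae_of_all _ hD0) hDmeas.aestronglyMeasurable
    have h4 : (∫⁻ s, g s ∂ξ) = ∫⁻ s, ∫⁻ t, g t ∂(P s) ∂ξ := by
      conv_lhs => rw [← hbind]
      exact Measure.lintegral_bind P.measurable.aemeasurable hgmeas.aemeasurable
    rw [h2, h3, h4]
  -- putting it together
  have hmain : ∫ s, Dfun s ∂ξ ≤ γ * (∫ s, Dfun s ∂ξ + ∫ s, Bfun s ∂ξ) := by
    have : ∫ s, Dfun s ∂ξ ≤ ∫ s, γ * (Afun s + Bfun s) ∂ξ :=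
      integral_mono intD (((intA.add intB).const_mul γ)) hpoint
    rwa [integral_const_mul, integral_add intA intB, hinvD] at this
  have h1γ : (0:ℝ) < 1 - γ := by linarith
  rw [le_div_iff₀ h1γ]
  nlinarith [hmain]
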